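/- Let n ≥ 2, let A = 2^{1/n}·M with M the real n×n matrix with M_{ii} = 1 for 1 ≤ i ≤ n−1, M_{in} = 1/2 for 1 ≤ i ≤ n, and all other entries 0, and let H be a real n×n diagonal matrix with positive diagonal entries. If v ∈ ℤⁿ is a nonzero integer vector with ‖HAv‖ = syst(HA) whose last coordinate vₙ is positive, then vₙ = 1 or vₙ = 2. -/

import Mathlib

/-- The Euclidean norm of a vector in `ℝⁿ`. -/
noncomputable def eNorm {n : ℕ} (x : Fin n → ℝ) : ℝ :=
  Real.sqrt (∑ i, (x i) ^ 2)

/-- The Euclidean norm of `A v` for an integer vector `v`. -/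
noncomputable def latNorm {n : ℕ} (A : Matrix (Fin n) (Fin n) ℝ) (v : Fin n → ℤ) : ℝ :=
  eNorm (A.mulVec (fun i => (v i : ℝ)))

/-- The systole of `A`: the infimum (in fact minimum) of `‖A v‖` over nonzero
integer vectors `v ∈ ℤⁿ`. -/
noncomputable def syst {n : ℕ} (A : Matrix (Fin n) (Fin n) ℝ) : ℝ :=
  sInf {r | ∃ v : Fin n → ℤ, v ≠ 0 ∧ r = latNorm A v}

/-- The matrix `M` with `M i i = 1` for `i` in the upper-left `(n-1) × (n-1)` block,
last column constantly `1/2`, and all other entries `0`. -/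
noncomputable def Mmat (n : ℕ) : Matrix (Fin n) (Fin n) ℝ :=
  Matrix.of fun i j => if (j : ℕ) = n - 1 then 1 / 2 else if i = j then 1 else 0

/-- The matrix `A = 2^(1/n) • M` (which has determinant `1`). -/
noncomputable def Amat (n : ℕ) : Matrix (Fin n) (Fin n) ℝ :=
  ((2 : ℝ) ^ ((1 : ℝ) / n)) • Mmat n

lemma Mmat_mulVec {n : ℕ} (hn : 2 ≤ n) (x : Fin n → ℝ) (i : Fin n) :
    (Mmat n).mulVec x i
      = (if (i : ℕ) = n - 1 then 0 else x i) + x ⟨n - 1, Nat.sub_lt (by omega) Nat.one_pos⟩ / 2 := by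
  have hlast : (⟨n - 1, by omega⟩ : Fin n) ∈ (Finset.univ : Finset (Fin n)) :=
    Finset.mem_univ _
  set last : Fin n := ⟨n - 1, by omega⟩ with hl
  have hcond : ∀ j : Fin n, ((j : ℕ) = n - 1) = (j = last) := by
    intro j; apply propext
    exact ⟨fun h => Fin.ext h, fun h => by rw [h]⟩
  simp only [Matrix.mulVec, dotProduct, Mmat, Matrix.of_apply, hcond]
  rw [Finset.sum_eq_sum_sdiff_singleton_add hlast]
  have h1 : ∀ j ∈ Finset.univ \ {last},
      (if j = last then (1:ℝ)/2 else if i = j then 1 else 0) * x j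
        = if i = j then x j else 0 := by
    intro j hj
    simp only [Finset.mem_sdiff, Finset.mem_singleton] at hj
    rw [if_neg hj.2]
    split <;> simp
  rw [Finset.sum_congr rfl h1, Finset.sum_ite_eq]
  simp only [Finset.mem_sdiff, Finset.mem_univ, Finset.mem_singleton, true_and,
    if_pos rfl]
  by_cases h : i = last
  · simp [h]; ring
  · simp [h]; ring

lemma HA_mulVec {n : ℕ} (hn : 2 ≤ n) (a : Fin n → ℝ) (x : Fin n → ℝ) (i : Fin n) :
    (Matrix.diagonal a * Amat n).mulVec x i
      = (2 : ℝ) ^ ((1 : ℝ) / n) * a i *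
        ((if (i : ℕ) = n - 1 then 0 else x i) + x ⟨n - 1, Nat.sub_lt (by omega) Nat.one_pos⟩ / 2) := by
  rw [← Matrix.mulVec_mulVec]
  rw [Matrix.mulVec_diagonal]
  unfold Amat
  rw [Matrix.smul_mulVec]
  simp only [Pi.smul_apply, smul_eq_mul]
  rw [Mmat_mulVec hn]
  ring

/-- For `H` diagonal with positive entries and `A = 2^(1/n) • M`, any shortest nonzero
integer vector of `H A` with positive last coordinate has last coordinate `1` or `2`. -/
theorem last_coord_of_shortest {n : ℕ} (hn : 2 ≤ n) (a : Fin n → ℝ) (ha : ∀ i, 0 < a i)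
    (v : Fin n → ℤ) (hv : v ≠ 0)
    (hshort : latNorm (Matrix.diagonal a * Amat n) v = syst (Matrix.diagonal a * Amat n))
    (hpos : 0 < v ⟨n - 1, by omega⟩) :
    v ⟨n - 1, by omega⟩ = 1 ∨ v ⟨n - 1, by omega⟩ = 2 := by
  by_contra hcon
  push_neg at hcon
  set last : Fin n := ⟨n - 1, by omega⟩ with hl
  have hk3 : 3 ≤ v last := by omega
  set c : ℝ := (2 : ℝ) ^ ((1 : ℝ) / n) with hc
  have hcpos : 0 < c := Real.rpow_pos_of_pos (by norm_num) _
  -- the competitor vector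
  set w : Fin n → ℤ := fun i => if i = last then v last - 2 else v i + 1 with hw
  have hwlast : w last = v last - 2 := by simp [hw]
  have hw0 : w ≠ 0 := by
    intro h
    have := congrFun h last
    simp [hw] at this
    omega
  set B := Matrix.diagonal a * Amat n with hB
  -- norms
  have hlt : latNorm B w < latNorm B v := by
    unfold latNorm eNorm
    apply Real.sqrt_lt_sqrt
    · positivity
    · apply Finset.sum_lt_sum
      · intro i _
        by_cases h : i = last
        · subst h
          rw [HA_mulVec hn, HA_mulVec hn]
          simp only [← hl]
          simp only [if_true, eq_self_iff_true, hwlast, if_pos (show ((last : ℕ) = n - 1) from rfl)]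
          push_cast
          have hai := ha last
          have hk : (3 : ℝ) ≤ (v last : ℝ) := by exact_mod_cast hk3
          nlinarith [sq_nonneg (c * a last), mul_pos hcpos hai]
        · rw [HA_mulVec hn, HA_mulVec hn]
          simp only [← hl]
          have h' : ¬ ((i : ℕ) = n - 1) := fun hh => h (Fin.ext hh)
          rw [if_neg h', if_neg h', hwlast]
          have : w i = v i + 1 := by simp [hw, h]
          rw [this]
          push_cast
          apply le_of_eq
          ring
      · refine ⟨last, Finset.mem_univ _, ?_⟩
        rw [HA_mulVec hn, HA_mulVec hn]
        simp only [← hl]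
        simp only [if_true, eq_self_iff_true, hwlast, if_pos (show ((last : ℕ) = n - 1) from rfl)]
        push_cast
        have hai := ha last
        have hk : (3 : ℝ) ≤ (v last : ℝ) := by exact_mod_cast hk3
        nlinarith [mul_pos hcpos hai, sq_nonneg (c * a last)]
  have hbdd : BddBelow {r | ∃ u : Fin n → ℤ, u ≠ 0 ∧ r = latNorm B u} := by
    refine ⟨0, fun r hr => ?_⟩
    obtain ⟨u, _, rfl⟩ := hr
    exact Real.sqrt_nonneg _
  have hmem : latNorm B w ∈ {r | ∃ u : Fin n → ℤ, u ≠ 0 ∧ r = latNorm B u} :=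
    ⟨w, hw0, rfl⟩
  have hle : syst B ≤ latNorm B w := csInf_le hbdd hmem
  linarith
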